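/- Let (x_n)_{n∈ℤ} be a (2,2)-sequence. Then for all n ∈ ℤ one has x_{n−1} + x_{n+1} = c·x_n, where c = x_1/x_0 + 1/(x_0·x_1) + x_0/x_1. In particular the quantity (x_{n−1} + x_{n+1})/x_n is independent of n. -/

import Mathlib

/-- For a (2,2)-sequence, x_{n-1} + x_{n+1} = c·x_n with
c = x_1/x_0 + 1/(x_0·x_1) + x_0/x_1; in particular (x_{n-1}+x_{n+1})/x_n
is independent of n. -/
theorem q22_conserved_quantity (x : ℤ → ℝ) (hpos : ∀ n, 0 < x n)
    (hrec : ∀ n : ℤ, x (n + 1) * x (n - 1) = x n ^ 2 + 1) :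
    ∀ n : ℤ, x (n - 1) + x (n + 1) =
      (x 1 / x 0 + 1 / (x 0 * x 1) + x 0 / x 1) * x n := by
  set c : ℝ := x 1 / x 0 + 1 / (x 0 * x 1) + x 0 / x 1 with hc
  -- forward step
  have step : ∀ n : ℤ, x (n - 1) + x (n + 1) = c * x n →
      x n + x (n + 2) = c * x (n + 1) := by
    intro n h
    have h1 := hrec n
    have h2 := hrec (n + 1)
    have e1 : (n : ℤ) + 1 + 1 = n + 2 := by ring
    have e2 : (n : ℤ) + 1 - 1 = n := by ring
    rw [e1, e2] at h2
    have hn := (hpos n).ne'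
    have key : x n * (x n + x (n + 2)) = x n * (c * x (n + 1)) := by
      linear_combination h2 + x (n + 1) * h - h1
    exact mul_left_cancel₀ hn key
  -- backward step
  have step' : ∀ n : ℤ, x n + x (n + 2) = c * x (n + 1) →
      x (n - 1) + x (n + 1) = c * x n := by
    intro n h
    have h1 := hrec n
    have h2 := hrec (n + 1)
    have e1 : (n : ℤ) + 1 + 1 = n + 2 := by ring
    have e2 : (n : ℤ) + 1 - 1 = n := by ring
    rw [e1, e2] at h2
    have hn := (hpos (n + 1)).ne'
    have key : x (n + 1) * (x (n - 1) + x (n + 1)) = x (n + 1) * (c * x n) := by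
      linear_combination h1 + x n * h - h2
    exact mul_left_cancel₀ hn key
  have base : x (0 - 1) + x (0 + 1) = c * x 0 := by
    have h0 := hrec 0
    have h1 : x (1 : ℤ) * x (-1) = x 0 ^ 2 + 1 := by
      have := hrec 0
      simpa using this
    have hx0 := (hpos 0).ne'
    have hx1 := (hpos 1).ne'
    have : x ((0 : ℤ) - 1) = x (-1) := by norm_num
    rw [this]
    show x (-1) + x (0 + 1) = c * x 0
    have h01 : x ((0 : ℤ) + 1) = x 1 := by norm_num
    rw [h01, hc]
    field_simp
    linear_combination h1
  intro n
  induction n using Int.induction_on with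
  | zero => exact base
  | succ k ih =>
      have := step k ih
      have e1 : (k : ℤ) + 1 - 1 = k := by ring
      have e2 : (k : ℤ) + 1 + 1 = k + 2 := by ring
      rw [e1, e2]
      exact this
  | pred k ih =>
      have := step' (-(k : ℤ) - 1) ?_
      · have e1 : (-(k : ℤ) - 1) - 1 = -(k + 1) - 1 := by ring
        have e2 : (-(k : ℤ) - 1) + 1 = -(k + 1) + 1 := by ring
        rw [e1, e2] at this
        convert this using 3
      · have e1 : (-(k : ℤ) - 1) + 2 = -k + 1 := by ring
        have e2 : (-(k : ℤ) - 1) + 1 = -k := by ring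
        have e3 : (-(k : ℤ) - 1) = -k - 1 := by ring
        rw [e1, e2, e3]
        exact ih
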